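/- If permutations π₁,…,π_k of {1,…,n} admit a monotone simultaneous embedding in ℝ^d, then there exist permutations π′₁,…,π′_k, each equal to π_j or its reverse, that admit a parallel simultaneous embedding in ℝ^d. -/

import Mathlib

lemma strictMono_of_lt_succ'' {n : ℕ} {f : Fin n → ℝ}
    (h : ∀ (i : ℕ) (hi : i + 1 < n), f ⟨i, Nat.lt_of_succ_lt hi⟩ < f ⟨i + 1, hi⟩) :
    StrictMono f := by
  have key : ∀ (m : ℕ) (hm : m < n) (a : Fin n), (a : ℕ) < m → f a < f ⟨m, hm⟩ := by
    intro m
    induction m with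
    | zero => intro _ a ha; omega
    | succ m ih =>
      intro hm a ha
      rcases Nat.lt_or_ge (a : ℕ) m with h' | h'
      · exact (ih (Nat.lt_of_succ_lt hm) a h').trans (h m hm)
      · have : (a : ℕ) = m := by omega
        have : a = ⟨m, Nat.lt_of_succ_lt hm⟩ := Fin.ext this
        rw [this]; exact h m hm
  intro a b hab
  have : f a < f ⟨(b : ℕ), b.2⟩ := key (b : ℕ) b.2 a hab
  simpa using this

lemma exists_w' {k d : ℕ} (v : Fin k → (Fin (d + 1) → ℝ)) (hv : ∀ j, v j ≠ 0) :
    ∃ w : Fin (d + 1) → ℝ, ∀ j, ∑ m, v j m * w m ≠ 0 := by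
  by_contra hcon
  push_neg at hcon
  set f : Fin k → ((Fin (d + 1) → ℝ) →ₗ[ℝ] ℝ) :=
    fun j => ∑ m, v j m • (LinearMap.proj m : (Fin (d + 1) → ℝ) →ₗ[ℝ] ℝ) with hf
  have hfapp : ∀ j w, f j w = ∑ m, v j m * w m := by
    intro j w; simp [hf, LinearMap.sum_apply]
  have hcover : ⋃ j, ((LinearMap.ker (f j) : Submodule ℝ (Fin (d+1) → ℝ)) : Set (Fin (d+1) → ℝ)) = Set.univ := by
    ext w
    simp only [Set.mem_iUnion, Set.mem_univ, iff_true, SetLike.mem_coe, LinearMap.mem_ker]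
    obtain ⟨j, hj⟩ := hcon w
    exact ⟨j, by rw [hfapp]; exact hj⟩
  obtain ⟨j, hj⟩ := Subspace.exists_eq_top_of_iUnion_eq_univ hcover
  have : f j (v j) = 0 := by
    have : v j ∈ LinearMap.ker (f j) := by rw [hj]; trivial
    exact this
  rw [hfapp] at this
  have hpos : 0 < ∑ m, v j m * v j m := by
    have hne : ∃ m, v j m ≠ 0 := by
      by_contra hc; push_neg at hc; exact hv j (funext hc)
    obtain ⟨m, hm⟩ := hne
    exact Finset.sum_pos' (fun i _ => mul_self_nonneg _)
      ⟨m, Finset.mem_univ m, mul_self_pos.mpr hm⟩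
  rw [this] at hpos; exact lt_irrefl 0 hpos

lemma calc_aux' {d : ℕ} (P V W : Fin (d + 1) → ℝ) (m₀ : Fin (d + 1))
    (hW : W m₀ ≠ 0) (hc : ∑ m, V m * W m ≠ 0) :
    (∑ i' : Fin d, (P (m₀.succAbove i') - P m₀ * W (m₀.succAbove i') / W m₀) *
        (V (m₀.succAbove i') / (∑ m, V m * W m))) + P m₀ / W m₀
      = (∑ m, P m * V m) / (∑ m, V m * W m) := by
  set c := ∑ m, V m * W m with hcdef
  have hterm : ∀ i' : Fin d,
      (P (m₀.succAbove i') - P m₀ * W (m₀.succAbove i') / W m₀) * (V (m₀.succAbove i') / c)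
        = P (m₀.succAbove i') * V (m₀.succAbove i') / c
          - P m₀ / W m₀ * (V (m₀.succAbove i') * W (m₀.succAbove i') / c) := by
    intro i'; field_simp
  rw [Finset.sum_congr rfl (fun i' _ => hterm i'), Finset.sum_sub_distrib,
    ← Finset.sum_div, ← Finset.mul_sum]
  have h1 : ∑ m, P m * V m = P m₀ * V m₀ + ∑ i' : Fin d, P (m₀.succAbove i') * V (m₀.succAbove i') :=
    Fin.sum_univ_succAbove _ m₀
  have h2 : c = V m₀ * W m₀ + ∑ i' : Fin d, V (m₀.succAbove i') * W (m₀.succAbove i') := by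
    rw [hcdef]; exact Fin.sum_univ_succAbove _ m₀
  rw [h1]
  set S1 := ∑ i' : Fin d, P (m₀.succAbove i') * V (m₀.succAbove i')
  set S2 := ∑ i' : Fin d, V (m₀.succAbove i') * W (m₀.succAbove i')
  rw [← Finset.sum_div]
  rw [h2] at hc ⊢
  field_simp
  ring

/-- If `k` permutations admit a monotone simultaneous embedding in `ℝ^(d+1)`, then some
permutations `π'_j`, each equal to `π_j` or its reverse, admit a parallel simultaneous
embedding in `ℝ^(d+1)` (hyperplanes are affine maps `ℝ^d → ℝ`). -/
theorem monotone_to_parallel_duality (d k n : ℕ) (π : Fin k → Equiv.Perm (Fin n))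
    (p : Fin n → (Fin (d + 1) → ℝ)) (v : Fin k → (Fin (d + 1) → ℝ))
    (hv : ∀ j, v j ≠ 0)
    (hmono : ∀ (j : Fin k) (i : Fin n) (hi : (i : ℕ) + 1 < n),
      0 < ∑ m, (p (π j ⟨(i : ℕ) + 1, hi⟩) m - p (π j i) m) * v j m) :
    ∃ π' : Fin k → Equiv.Perm (Fin n),
      (∀ j, π' j = π j ∨ π' j = (Fin.revPerm).trans (π j)) ∧
      ∃ (h : Fin n → ((Fin d → ℝ) →ᵃ[ℝ] ℝ)) (ℓ : Fin k → (Fin d → ℝ)),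
        ∀ j : Fin k, StrictMono fun i : Fin n => h (π' j i) (ℓ j) := by
  classical
  obtain ⟨w, hw⟩ := exists_w' v hv
  by_cases hk : ∃ m₀, w m₀ ≠ 0
  · obtain ⟨m₀, hm₀⟩ := hk
    set c : Fin k → ℝ := fun j => ∑ m, v j m * w m with hcdef
    set h : Fin n → ((Fin d → ℝ) →ᵃ[ℝ] ℝ) := fun i =>
      (∑ i' : Fin d, (p i (m₀.succAbove i') - p i m₀ * w (m₀.succAbove i') / w m₀) •
        (LinearMap.proj i' : (Fin d → ℝ) →ₗ[ℝ] ℝ)).toAffineMap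
      + AffineMap.const ℝ (Fin d → ℝ) (p i m₀ / w m₀) with hhdef
    set ℓ : Fin k → (Fin d → ℝ) := fun j i' => v j (m₀.succAbove i') / c j with hldef
    have hval : ∀ i j, h i (ℓ j) = (∑ m, p i m * v j m) / c j := by
      intro i j
      have := calc_aux' (p i) (v j) w m₀ hm₀ (hw j)
      rw [← this]
      simp only [hhdef, hldef, hcdef, AffineMap.coe_add, Pi.add_apply, AffineMap.const_apply,
        LinearMap.coe_toAffineMap, LinearMap.sum_apply, LinearMap.smul_apply,
        LinearMap.proj_apply, smul_eq_mul]
    have hG : ∀ j, StrictMono fun i : Fin n => ∑ m, p (π j i) m * v j m := by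
      intro j
      apply strictMono_of_lt_succ''
      intro i hi
      have := hmono j ⟨i, Nat.lt_of_succ_lt hi⟩ hi
      simp only [sub_mul, Finset.sum_sub_distrib] at this
      linarith [this]
    refine ⟨fun j => if 0 < c j then π j else (Fin.revPerm).trans (π j), ?_, h, ℓ, ?_⟩
    · intro j
      by_cases hcj : 0 < c j
      · exact Or.inl (if_pos hcj)
      · exact Or.inr (if_neg hcj)
    intro j
    by_cases hcj : 0 < c j
    · simp only [if_pos hcj]
      intro a b hab
      show h (π j a) (ℓ j) < h (π j b) (ℓ j)
      rw [hval, hval]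
      exact (div_lt_div_iff_of_pos_right hcj).mpr (hG j hab)
    · simp only [if_neg hcj]
      have hneg : c j < 0 := lt_of_le_of_ne (not_lt.mp hcj) (hw j)
      intro a b hab
      show h ((Equiv.trans Fin.revPerm (π j)) a) (ℓ j) < h ((Equiv.trans Fin.revPerm (π j)) b) (ℓ j)
      simp only [Equiv.trans_apply, Fin.revPerm_apply]
      rw [hval, hval]
      have : (∑ m, p (π j b.rev) m * v j m) < ∑ m, p (π j a.rev) m * v j m :=
        hG j (Fin.rev_lt_rev.mpr hab)
      exact div_lt_div_of_neg_of_lt hneg this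
  · push_neg at hk
    have hw0 : w = 0 := funext hk
    refine ⟨π, fun j => Or.inl rfl, fun _ => AffineMap.const ℝ _ 0, fun _ => 0, ?_⟩
    intro j
    exact absurd (hw j) (by simp [hw0, not_not])
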